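/- Suppose f is convex and let x : [0, ∞) → F be a C¹ solution of the steepest descent equation ẋ(t) = −∇²h(x(t))⁻¹[I − Aᵀ(A∇²h(x(t))⁻¹Aᵀ)⁻¹A∇²h(x(t))⁻¹]∇f(x(t)) with x(0) = x⁰ ∈ F. Then for every a ∈ F and every t > 0, f(x(t)) ≤ f(a) + D_h(a, x⁰)/t, and consequently lim_{t→∞} f(x(t)) = inf_{cl F} f. -/

import Mathlib

noncomputable section
open Set Filter Topology Matrix MeasureTheory

abbrev E (n : ℕ) := EuclideanSpace ℝ (Fin n)

/-- Action of a matrix on a vector of `EuclideanSpace ℝ (Fin n)`. -/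
def matVec {n : ℕ} (M : Matrix (Fin n) (Fin n) ℝ) (v : E n) : E n := WithLp.toLp 2 (M.mulVec v)

/-- The continuous linear map on Euclidean space associated with a matrix. -/
def matCLM {n : ℕ} (M : Matrix (Fin n) (Fin n) ℝ) : E n →L[ℝ] E n :=
  LinearMap.toContinuousLinearMap (Matrix.toEuclideanLin M)

/-- The steepest descent vector field
`x ↦ −H(x)⁻¹[I − Aᵀ(A H(x)⁻¹ Aᵀ)⁻¹ A H(x)⁻¹] g(x)` for the Hessian metric. -/
def sdVF {n m : ℕ} (A : Matrix (Fin m) (Fin n) ℝ)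
    (Hess : E n → Matrix (Fin n) (Fin n) ℝ) (g : E n → E n) (x : E n) : E n :=
  -(matVec ((Hess x)⁻¹ * (1 - Aᵀ * (A * (Hess x)⁻¹ * Aᵀ)⁻¹ * A * (Hess x)⁻¹)) (g x))

/-- The `D`-function (Bregman distance) of `h`: `D_h(a,y) = h(a) − h(y) − ⟨∇h(y), a − y⟩`. -/
def Dh {n : ℕ} (h : E n → ℝ) (a y : E n) : ℝ :=
  h a - h y - (inner ℝ (gradient h y) (a - y) : ℝ)

namespace Stmt9Aux

lemma inner_eq_dot {n : ℕ} (v w : E n) : (inner ℝ v w : ℝ) = (v : Fin n → ℝ) ⬝ᵥ (w : Fin n → ℝ) := by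
  simp [PiLp.inner_apply, dotProduct, RCLike.inner_apply, mul_comm]

lemma matCLM_apply {n : ℕ} (M : Matrix (Fin n) (Fin n) ℝ) (v : E n) : matCLM M v = matVec M v := rfl

lemma inner_grad_le {n : ℕ} {s : Set (E n)} {g : E n → ℝ} (hg : ConvexOn ℝ s g)
    {p q : E n} (hp : p ∈ s) (hq : q ∈ s) {L : E n →L[ℝ] ℝ} (hd : HasFDerivAt g L p) :
    L (q - p) ≤ g q - g p := by
  have hline : HasDerivAt (fun r : ℝ => p + r • (q - p)) (q - p) 0 := by
    simpa using ((hasDerivAt_id (0:ℝ)).smul_const (q - p)).const_add p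
  have hφ : HasDerivAt (fun r : ℝ => g (p + r • (q - p))) (L (q - p)) 0 := by
    have h0 : HasFDerivAt g L (p + (0:ℝ) • (q - p)) := by simpa using hd
    exact h0.comp_hasDerivAt 0 hline
  have hslope := hasDerivAt_iff_tendsto_slope.1 hφ
  have hslope' : Tendsto (slope (fun r : ℝ => g (p + r • (q - p))) 0) (𝓝[>] 0) (𝓝 (L (q - p))) :=
    hslope.mono_left (nhdsWithin_mono _ (fun r hr => ne_of_gt hr))
  refine le_of_tendsto hslope' ?_
  filter_upwards [Ioc_mem_nhdsGT_of_mem (Set.left_mem_Ico.2 one_pos)] with r hr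
  have hr0 : 0 < r := hr.1
  have hmem : p + r • (q - p) = (1 - r) • p + r • q := by
    rw [smul_sub, sub_smul, one_smul]; abel
  have hcvx := hg.2 hp hq (by linarith [hr.2] : (0:ℝ) ≤ 1 - r) hr0.le (by ring)
  have h1 : g (p + r • (q - p)) ≤ (1 - r) * g p + r * g q := by
    rw [hmem]; simpa [smul_eq_mul] using hcvx
  rw [slope_def_field]
  simp only [sub_zero, zero_smul, add_zero]
  rw [div_le_iff₀ hr0]
  nlinarith [h1]

variable {n m : ℕ}

lemma W_posdef (A : Matrix (Fin m) (Fin n) ℝ)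
    (hA : Function.Injective (Aᵀ.mulVec)) {S : Matrix (Fin n) (Fin n) ℝ} (hS : S.PosDef) :
    (A * S * Aᵀ).PosDef := by
  refine Matrix.PosDef.of_dotProduct_mulVec_pos ?_ ?_
  · have hSh : Sᴴ = S := hS.isHermitian
    show (A * S * Aᵀ)ᴴ = _
    rw [conjTranspose_mul, conjTranspose_mul, hSh]
    rw [conjTranspose_eq_transpose_of_trivial, conjTranspose_eq_transpose_of_trivial,
      transpose_transpose, Matrix.mul_assoc]
  · intro y hy
    have hne : Aᵀ *ᵥ y ≠ 0 := by
      intro hc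
      exact hy (hA (by simpa using hc))
    have := hS.dotProduct_mulVec_pos hne
    simp only [star_trivial] at this ⊢
    rw [← Matrix.mulVec_mulVec, ← Matrix.mulVec_mulVec, Matrix.dotProduct_mulVec y A,
      ← Matrix.mulVec_transpose]
    exact this

lemma psd_key (A : Matrix (Fin m) (Fin n) ℝ) (hA : Function.Injective (Aᵀ.mulVec))
    {H : Matrix (Fin n) (Fin n) ℝ} (hH : H.PosDef) (g : Fin n → ℝ) :
    0 ≤ g ⬝ᵥ ((H⁻¹ * (1 - Aᵀ * (A * H⁻¹ * Aᵀ)⁻¹ * A * H⁻¹)) *ᵥ g) := by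
  set S := H⁻¹ with hSdef
  have hS : S.PosDef := hH.inv
  have hW : (A * S * Aᵀ).PosDef := W_posdef A hA hS
  set W := A * S * Aᵀ with hWdef
  have hWdet : IsUnit W.det := (Matrix.isUnit_iff_isUnit_det W).1 hW.isUnit
  have hWW : W * W⁻¹ = 1 := Matrix.mul_nonsing_inv _ hWdet
  set w := A *ᵥ (S *ᵥ g) with hw
  set u := W⁻¹ *ᵥ w with hu
  set p := g - Aᵀ *ᵥ u with hp
  -- the matrix applied to g equals S *ᵥ p
  have hXg : (Aᵀ * W⁻¹ * A * S) *ᵥ g = Aᵀ *ᵥ u := by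
    rw [← Matrix.mulVec_mulVec, ← Matrix.mulVec_mulVec, ← Matrix.mulVec_mulVec]
  have hMg : (S * (1 - Aᵀ * W⁻¹ * A * S)) *ᵥ g = S *ᵥ p := by
    rw [← Matrix.mulVec_mulVec, Matrix.sub_mulVec, Matrix.one_mulVec, hXg, hp,
      Matrix.mulVec_sub]
  have hWu : W *ᵥ u = w := by rw [hu, Matrix.mulVec_mulVec, hWW, Matrix.one_mulVec]
  have hASAu : A *ᵥ (S *ᵥ (Aᵀ *ᵥ u)) = W *ᵥ u := by
    rw [Matrix.mulVec_mulVec, Matrix.mulVec_mulVec, hWdef]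
  have hASp : A *ᵥ (S *ᵥ p) = 0 := by
    rw [hp, Matrix.mulVec_sub, Matrix.mulVec_sub, hASAu, hWu, ← hw, sub_self]
  have h0 : 0 ≤ p ⬝ᵥ (S *ᵥ p) := by simpa using hS.posSemidef.dotProduct_mulVec_nonneg p
  have hup : (Aᵀ *ᵥ u) ⬝ᵥ (S *ᵥ p) = 0 := by
    rw [Matrix.mulVec_transpose, ← Matrix.dotProduct_mulVec, hASp, dotProduct_zero]
  have hgp : g ⬝ᵥ (S *ᵥ p) = p ⬝ᵥ (S *ᵥ p) + (Aᵀ *ᵥ u) ⬝ᵥ (S *ᵥ p) := by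
    rw [hp, sub_dotProduct]; ring
  rw [hMg, hgp, hup, add_zero] at *
  exact h0

lemma hess_dot (A : Matrix (Fin m) (Fin n) ℝ) {H : Matrix (Fin n) (Fin n) ℝ} (hH : H.PosDef)
    (g w : Fin n → ℝ) (hw : A *ᵥ w = 0) :
    (H *ᵥ ((H⁻¹ * (1 - Aᵀ * (A * H⁻¹ * Aᵀ)⁻¹ * A * H⁻¹)) *ᵥ g)) ⬝ᵥ w = g ⬝ᵥ w := by
  have hHdet : IsUnit H.det := (Matrix.isUnit_iff_isUnit_det H).1 hH.isUnit
  set X := Aᵀ * (A * H⁻¹ * Aᵀ)⁻¹ * A * H⁻¹ with hXdef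
  have h1 : H *ᵥ ((H⁻¹ * (1 - X)) *ᵥ g) = g - X *ᵥ g := by
    rw [Matrix.mulVec_mulVec, ← Matrix.mul_assoc, Matrix.mul_nonsing_inv _ hHdet,
      Matrix.one_mul, Matrix.sub_mulVec, Matrix.one_mulVec]
  have h2 : (X *ᵥ g) ⬝ᵥ w = 0 := by
    rw [hXdef, ← Matrix.mulVec_mulVec, ← Matrix.mulVec_mulVec, ← Matrix.mulVec_mulVec,
      Matrix.mulVec_transpose, ← Matrix.dotProduct_mulVec, hw, dotProduct_zero]
  rw [h1, sub_dotProduct, h2, sub_zero]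

lemma AT_injective (A : Matrix (Fin m) (Fin n) ℝ) (hrank : A.rank = m) :
    Function.Injective (Aᵀ.mulVec) := by
  have hrT : Aᵀ.rank = m := by rw [Matrix.rank_transpose]; exact hrank
  have hker : LinearMap.ker (Aᵀ.mulVecLin) = ⊥ := by
    have hrn := LinearMap.finrank_range_add_finrank_ker (Aᵀ.mulVecLin)
    rw [show Module.finrank ℝ (Fin m → ℝ) = m by simp] at hrn
    have : Module.finrank ℝ (LinearMap.range Aᵀ.mulVecLin) = m := hrT
    have h0 : Module.finrank ℝ (LinearMap.ker Aᵀ.mulVecLin) = 0 := by omega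
    exact Submodule.finrank_eq_zero.1 h0
  have := LinearMap.ker_eq_bot.1 hker
  intro a b hab
  exact this (by simpa only [Matrix.mulVecLin_apply] using hab)

lemma mulVec_sub_E {n m : ℕ} (A : Matrix (Fin m) (Fin n) ℝ) (v w : E n) :
    A *ᵥ ((v - w : E n) : Fin n → ℝ) = A *ᵥ (v : Fin n → ℝ) - A *ᵥ (w : Fin n → ℝ) := by
  have h : ((v - w : E n) : Fin n → ℝ) = (v : Fin n → ℝ) - (w : Fin n → ℝ) := rfl
  rw [h, Matrix.mulVec_sub]

lemma mulVec_neg_E {n : ℕ} (M : Matrix (Fin n) (Fin n) ℝ) (v : E n) :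
    M *ᵥ ((-v : E n) : Fin n → ℝ) = -(M *ᵥ (v : Fin n → ℝ)) := by
  have h : ((-v : E n) : Fin n → ℝ) = -(v : Fin n → ℝ) := rfl
  rw [h, Matrix.mulVec_neg]

end Stmt9Aux

open Stmt9Aux in
/-- value convergence for a convex objective.  If `f` is convex and
`x : [0,∞) → F` is a `C¹` solution of the steepest descent equation with `x(0)=x⁰ ∈ F`,
then `f(x(t)) ≤ f(a) + D_h(a,x⁰)/t` for all `a ∈ F` and `t > 0`, and consequently
`f(x(t)) → inf_{cl F} f` as `t → ∞`. -/
theorem stmt9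
    -- problem data: a full rank `m×n` matrix `A` (`m < n`), `b ∈ ℝᵐ`
    {n m : ℕ} (hm : 0 < m) (hmn : m < n)
    (A : Matrix (Fin m) (Fin n) ℝ) (b : Fin m → ℝ) (hrank : A.rank = m)
    -- `C` is a nonempty open convex set, `F = C ∩ {x | Ax = b}` is nonempty
    (C : Set (E n)) (hCopen : IsOpen C) (hCconv : Convex ℝ C) (hCne : C.Nonempty)
    (hFne : (C ∩ {x | A.mulVec x = b}).Nonempty)
    (h : E n → ℝ) (Hess : E n → Matrix (Fin n) (Fin n) ℝ)
    -- `(H₀)`: `h` is of Legendre type with `int dom h = C`: it is strictly convex on `C`,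
    -- `C²` on `C`, and its gradient blows up at the boundary of `C`;
    -- its Hessian `Hess` is positive definite and locally Lipschitz on `C`
    (hhC2 : ContDiffOn ℝ 2 h C) (hhconv : ConvexOn ℝ C h) (hhstrict : StrictConvexOn ℝ C h)
    (hLeg : ∀ (z : ℕ → E n) (x' : E n), (∀ j, z j ∈ C) → x' ∈ frontier C →
      Tendsto z atTop (𝓝 x') → Tendsto (fun j => ‖gradient h (z j)‖) atTop atTop)
    (hHess : ∀ x ∈ C, HasFDerivAt (gradient h) (matCLM (Hess x)) x)
    (hHpos : ∀ x ∈ C, (Hess x).PosDef)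
    (hHlip : ∀ x ∈ C, ∃ ε > 0, ∃ K : ℝ, ∀ y ∈ C ∩ Metric.ball x ε, ∀ z ∈ C ∩ Metric.ball x ε,
      ‖matCLM (Hess y) - matCLM (Hess z)‖ ≤ K * ‖y - z‖)
    -- `f` is convex and `C¹` with locally Lipschitz gradient
    (f : E n → ℝ) (hfconv : ConvexOn ℝ univ f) (hf : ContDiff ℝ 1 f)
    (hfgrad : ∀ x : E n, ∃ ε > 0, ∃ K : ℝ, ∀ y ∈ Metric.ball x ε, ∀ z ∈ Metric.ball x ε,
      ‖gradient f y - gradient f z‖ ≤ K * ‖y - z‖)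
    -- the global trajectory
    (x : ℝ → E n) (x0 : E n) (hx0 : x 0 = x0) (hx0F : x0 ∈ C ∩ {z | A.mulVec z = b})
    (hmem : ∀ t ∈ Ici (0:ℝ), x t ∈ C ∩ {z | A.mulVec z = b})
    (hode : ∀ t ∈ Ici (0:ℝ), HasDerivAt x (sdVF A Hess (gradient f) (x t)) t) :
    (∀ a ∈ C ∩ {z | A.mulVec z = b}, ∀ t : ℝ, 0 < t →
      f (x t) ≤ f a + Dh h a x0 / t) ∧
    Tendsto (fun t => (f (x t) : EReal)) atTop
      (𝓝 (⨅ z ∈ closure (C ∩ {z | A.mulVec z = b}), (f z : EReal))) := by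
  have hAT : Function.Injective (Aᵀ.mulVec) := AT_injective A hrank
  have hmemC : ∀ t ∈ Ici (0:ℝ), x t ∈ C := fun t ht => (hmem t ht).1
  have hdf : Differentiable ℝ f := hf.differentiable one_ne_zero
  -- convexity inequality for f
  have hfle : ∀ p q : E n, (inner ℝ (gradient f p) (q - p) : ℝ) ≤ f q - f p := by
    intro p q
    have := inner_grad_le hfconv (mem_univ p) (mem_univ q) (hdf p).hasGradientAt.hasFDerivAt
    rwa [InnerProductSpace.toDual_apply_apply] at this
  have part1 : ∀ a ∈ C ∩ {z | A.mulVec z = b}, ∀ t : ℝ, 0 < t →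
      f (x t) ≤ f a + Dh h a x0 / t := by
    intro a ha t ht
    set G : ℝ → ℝ := fun s => s * (f (x s) - f a) + Dh h a (x s) with hGdef
    have hGd : ∀ s ∈ Ici (0:ℝ), HasDerivAt G
        ((f (x s) - f a) + s * (inner ℝ (gradient f (x s)) (sdVF A Hess (gradient f) (x s)) : ℝ)
          - (inner ℝ ((matCLM (Hess (x s))) (sdVF A Hess (gradient f) (x s))) (a - x s) : ℝ)) s := by
      intro s hs
      have hxC : x s ∈ C := hmemC s hs
      have hx' := hode s hs
      set v := sdVF A Hess (gradient f) (x s) with hv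
      have hDf : HasDerivAt (fun τ => f (x τ)) ((inner ℝ (gradient f (x s)) v : ℝ)) s := by
        have := ((hdf (x s)).hasGradientAt.hasFDerivAt).comp_hasDerivAt s hx'
        rw [InnerProductSpace.toDual_apply_apply] at this
        exact this
      have hdiffh : DifferentiableAt ℝ h (x s) :=
        (hhC2.differentiableOn two_ne_zero).differentiableAt (hCopen.mem_nhds hxC)
      have hDhh : HasDerivAt (fun τ => h (x τ)) ((inner ℝ (gradient h (x s)) v : ℝ)) s := by
        have := (hdiffh.hasGradientAt.hasFDerivAt).comp_hasDerivAt s hx'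
        rw [InnerProductSpace.toDual_apply_apply] at this
        exact this
      have hDgh : HasDerivAt (fun τ => gradient h (x τ)) (matCLM (Hess (x s)) v) s := by
        have := (hHess (x s) hxC).comp_hasDerivAt s hx'
        exact this
      have hDax : HasDerivAt (fun τ => a - x τ) (-v) s := hx'.const_sub a
      have hDinner : HasDerivAt (fun τ => (inner ℝ (gradient h (x τ)) (a - x τ) : ℝ))
          ((inner ℝ (gradient h (x s)) (-v) : ℝ) + (inner ℝ (matCLM (Hess (x s)) v) (a - x s) : ℝ)) s :=
        hDgh.inner ℝ hDax
      have h1 : HasDerivAt (fun τ => τ * (f (x τ) - f a))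
          ((f (x s) - f a) + s * (inner ℝ (gradient f (x s)) v : ℝ)) s := by
        have := (hasDerivAt_id s).mul (hDf.sub_const (f a))
        exact this.congr_deriv (by simp)
      have h2 : HasDerivAt (fun τ => Dh h a (x τ))
          (-(inner ℝ (gradient h (x s)) v : ℝ) -
            ((inner ℝ (gradient h (x s)) (-v) : ℝ) +
              (inner ℝ (matCLM (Hess (x s)) v) (a - x s) : ℝ))) s := by
        have := (hDhh.const_sub (h a)).sub hDinner
        exact this
      have := h1.add h2
      refine this.congr_deriv ?_
      rw [inner_neg_right]
      ring
    have hanti : AntitoneOn G (Ici 0) := by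
      apply antitoneOn_of_deriv_nonpos (convex_Ici 0)
      · exact fun s hs => ((hGd s hs).continuousAt).continuousWithinAt
      · intro s hs
        rw [interior_Ici] at hs
        exact ((hGd s (Set.mem_Ici.2 (le_of_lt hs))).differentiableAt).differentiableWithinAt
      · intro s hs
        rw [interior_Ici] at hs
        rw [(hGd s (Set.mem_Ici.2 (le_of_lt hs))).deriv]
        have hxC : x s ∈ C := hmemC s (Set.mem_Ici.2 (le_of_lt hs))
        have hpos := hHpos (x s) hxC
        set gf : E n := gradient f (x s) with hgfdef
        set M2 : Matrix (Fin n) (Fin n) ℝ :=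
          (Hess (x s))⁻¹ * (1 - Aᵀ * (A * (Hess (x s))⁻¹ * Aᵀ)⁻¹ * A * (Hess (x s))⁻¹) with hM2
        have hsd : sdVF A Hess (gradient f) (x s) = -(matVec M2 gf) := rfl
        -- first: inner gf v ≤ 0
        have hiv : (inner ℝ gf (sdVF A Hess (gradient f) (x s)) : ℝ) ≤ 0 := by
          have hkey := psd_key A hAT hpos (gf : Fin n → ℝ)
          have heq : (inner ℝ gf (sdVF A Hess (gradient f) (x s)) : ℝ)
              = -((gf : Fin n → ℝ) ⬝ᵥ (M2 *ᵥ (gf : Fin n → ℝ))) := by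
            rw [hsd, inner_neg_right, inner_eq_dot]
            rfl
          rw [heq, hM2]
          linarith
        -- second: inner (Hess v) (a - x s) = -(gf ⬝ᵥ (a - x s))
        have hA0 : A *ᵥ ((a - x s : E n) : Fin n → ℝ) = 0 := by
          rw [mulVec_sub_E, ha.2, (hmem s (Set.mem_Ici.2 (le_of_lt hs))).2, sub_self]
        have hHv : (inner ℝ ((matCLM (Hess (x s))) (sdVF A Hess (gradient f) (x s))) (a - x s) : ℝ)
            = -((gf : Fin n → ℝ) ⬝ᵥ ((a - x s : E n) : Fin n → ℝ)) := by
          rw [matCLM_apply, inner_eq_dot, hsd]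
          have e1 : ((matVec (Hess (x s)) (-(matVec M2 gf)) : E n) : Fin n → ℝ)
              = -((Hess (x s)) *ᵥ (M2 *ᵥ (gf : Fin n → ℝ))) := mulVec_neg_E _ _
          rw [e1, neg_dotProduct, neg_inj, hM2]
          exact hess_dot A hpos _ _ hA0
        have hfa : (inner ℝ gf (a - x s) : ℝ) ≤ f a - f (x s) := hfle (x s) a
        have hinner_dot : (inner ℝ gf (a - x s) : ℝ)
            = (gf : Fin n → ℝ) ⬝ᵥ ((a - x s : E n) : Fin n → ℝ) := inner_eq_dot _ _
        rw [hHv]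
        have hs0 : s * (inner ℝ gf (sdVF A Hess (gradient f) (x s)) : ℝ) ≤ 0 :=
          mul_nonpos_iff.2 (Or.inl ⟨le_of_lt hs, hiv⟩)
        linarith [hfa, hs0, hinner_dot]
    have h0m : (0:ℝ) ∈ Ici (0:ℝ) := self_mem_Ici
    have htm : t ∈ Ici (0:ℝ) := le_of_lt ht
    have hGle : G t ≤ G 0 := hanti h0m htm ht.le
    have hG0val : G 0 = Dh h a x0 := by simp [hGdef, hx0]
    have hxtC : x t ∈ C := hmemC t ht.le
    have hdiffh : DifferentiableAt ℝ h (x t) :=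
      (hhC2.differentiableOn two_ne_zero).differentiableAt (hCopen.mem_nhds hxtC)
    have hDh0 : 0 ≤ Dh h a (x t) := by
      have hle := inner_grad_le hhconv hxtC ha.1 hdiffh.hasGradientAt.hasFDerivAt
      rw [InnerProductSpace.toDual_apply_apply] at hle
      rw [Dh]
      linarith
    have hkey : t * (f (x t) - f a) ≤ Dh h a x0 := by
      have : t * (f (x t) - f a) + Dh h a (x t) ≤ Dh h a x0 := by
        rw [← hG0val]; exact hGle
      linarith
    have h2 : f (x t) - f a ≤ Dh h a x0 / t := by
      rw [le_div_iff₀ ht]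
      nlinarith [hkey]
    linarith
  refine ⟨part1, ?_⟩
  set Fs := C ∩ {z | A.mulVec z = b} with hFs
  refine tendsto_order.2 ⟨?_, ?_⟩
  · intro c hc
    filter_upwards [eventually_ge_atTop (0:ℝ)] with t htt
    have hxt : x t ∈ closure Fs := subset_closure (hmem t htt)
    exact lt_of_lt_of_le hc (iInf₂_le (x t) hxt)
  · intro c hc
    have hzc : ∃ z ∈ closure Fs, (f z : EReal) < c := by
      by_contra hcon
      push_neg at hcon
      exact absurd hc (not_lt.2 (le_iInf₂ hcon))
    obtain ⟨z, hz, hfz⟩ := hzc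
    obtain ⟨r, hr1, hr2⟩ := EReal.lt_iff_exists_real_btwn.1 hfz
    have hfr : f z < r := by exact_mod_cast hr1
    have hU : IsOpen (f ⁻¹' Iio r) := isOpen_Iio.preimage hf.continuous
    obtain ⟨a, haU⟩ := mem_closure_iff.1 hz _ hU hfr
    have haF : a ∈ Fs := haU.2
    have har : f a < r := haU.1
    have htend : Tendsto (fun t : ℝ => f a + Dh h a x0 / t) atTop (𝓝 (f a)) := by
      have hdiv : Tendsto (fun t : ℝ => Dh h a x0 / t) atTop (𝓝 0) := by
        simpa [div_eq_mul_inv] using tendsto_inv_atTop_zero.const_mul (Dh h a x0)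
      simpa using tendsto_const_nhds.add hdiv
    filter_upwards [htend.eventually_lt_const har, eventually_gt_atTop (0:ℝ)] with t htr ht0
    have hb := part1 a haF t ht0
    have hlt : f (x t) < r := lt_of_le_of_lt hb htr
    calc (f (x t) : EReal) < (r : EReal) := by exact_mod_cast hlt
      _ < c := hr2
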